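/- Let p, q be real numbers with 0 < p < 1 and 0 < q < 1. The set of pairs (A, B) ∈ ℝ × ℂ satisfying the Calow–Matthes 2-sphere relations interpreted in ℂ (with * the complex conjugation), namely |B|² − q|B|² = (p − q)A + 1 − p, AB − pBA = (1 − p)B, and (1 − A)(|B|² − A) = 0, is exactly { (1, B) : B ∈ ℂ, |B| = 1 }. In particular, the classical subset of the Calow–Matthes quantum 2-sphere is a circle. -/

import Mathlib

/-- The classical subset of the Calow–Matthes quantum 2-sphere is the circle
`{(1, B) : |B| = 1}`. -/
theorem calow_matthes_2sphere_classical_points (p q : ℝ)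
    (hp0 : 0 < p) (hp1 : p < 1) (hq0 : 0 < q) (hq1 : q < 1) :
    {x : ℝ × ℂ |
        (‖x.2‖) ^ 2 - q * (‖x.2‖) ^ 2 = (p - q) * x.1 + 1 - p ∧
        (x.1 : ℂ) * x.2 - (p : ℂ) * (x.2 * (x.1 : ℂ)) = ((1 - p : ℝ) : ℂ) * x.2 ∧
        (1 - x.1) * ((‖x.2‖) ^ 2 - x.1) = 0} =
    {x : ℝ × ℂ | x.1 = 1 ∧ ‖x.2‖ = 1} := by
  ext ⟨A, B⟩
  simp only [Set.mem_setOf_eq]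
  constructor
  · rintro ⟨h1, h2, h3⟩
    -- second relation: (1-p)*(A-1)*B = 0
    have h2' : (((1 - p) * (A - 1) : ℝ) : ℂ) * B = 0 := by
      push_cast
      push_cast at h2
      ring_nf
      ring_nf at h2
      linear_combination h2
    have hA1 : A = 1 := by
      rcases mul_eq_zero.1 h2' with h | hB
      · have : (1 - p) * (A - 1) = 0 := by exact_mod_cast h
        rcases mul_eq_zero.1 this with h' | h'
        · nlinarith
        · linarith [sub_eq_zero.1 h']
      · -- B = 0
        rw [hB] at h1 h3
        simp at h1 h3
        rcases h3 with h3 | h3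
        · nlinarith
        · nlinarith
    subst hA1
    refine ⟨rfl, ?_⟩
    have : (1 - q) * (‖B‖) ^ 2 = 1 - q := by nlinarith
    have hB2 : (‖B‖) ^ 2 = 1 := by
      have hq : (1 : ℝ) - q ≠ 0 := by linarith
      field_simp at this
      nlinarith
    nlinarith [norm_nonneg B]
  · rintro ⟨hA, hB⟩
    subst hA
    rw [hB]
    refine ⟨by ring, by push_cast; ring, by ring⟩
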